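/- For a finite group G, g ∈ G, and an integer k ≥ 1, the homomorphisms α_k : Λ^k_G(g) → Λ_G(g), [h, t] ↦ [h, t/k], and π_k : Λ^k_G(g) → ℝ/kℤ, [h, t] ↦ t mod kℤ, exhibit Λ^k_G(g) as the pullback of π : Λ_G(g) → ℝ/ℤ, [h, t] ↦ t mod ℤ, along the reduction map ℝ/kℤ → ℝ/ℤ, t ↦ t/k mod ℤ: the induced homomorphism from Λ^k_G(g) to the fiber product {(x, u) ∈ Λ_G(g) × (ℝ/kℤ) : π(x) = u/k mod ℤ} is a group isomorphism. -/

import Mathlib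

noncomputable section

/-- The element `g` as an element of its own centralizer. -/
def gElem {G : Type} [Group G] (g : G) : Subgroup.centralizer ({g} : Set G) :=
  ⟨g, by rw [Subgroup.mem_centralizer_iff]; rintro h rfl; rfl⟩

/-- The central element `(g, -k)` of `C_G(g) × ℝ`. -/
def zElem {G : Type} [Group G] (g : G) (k : ℤ) :
    Subgroup.centralizer ({g} : Set G) × Multiplicative ℝ :=
  (gElem g, Multiplicative.ofAdd (-(k : ℝ)))

theorem zElem_comm {G : Type} [Group G] (g : G) (k : ℤ)
    (x : Subgroup.centralizer ({g} : Set G) × Multiplicative ℝ) :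
    Commute x (zElem g k) := by
  have h1 : x.1 * gElem g = gElem g * x.1 := by
    apply Subtype.ext
    exact (Subgroup.mem_centralizer_iff.mp x.1.2 g rfl).symm
  exact Prod.ext h1 (mul_comm _ _)

/-- The subgroup of `C_G(g) × ℝ` generated by `(g, -k)`. -/
def lambdaRel {G : Type} [Group G] (g : G) (k : ℤ) :
    Subgroup (Subgroup.centralizer ({g} : Set G) × Multiplicative ℝ) :=
  Subgroup.zpowers (zElem g k)

instance lambdaRel_normal {G : Type} [Group G] (g : G) (k : ℤ) : (lambdaRel g k).Normal := by
  constructor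
  intro n hn x
  rw [lambdaRel, Subgroup.mem_zpowers_iff] at hn
  obtain ⟨m, rfl⟩ := hn
  have h := ((zElem_comm g k x).zpow_right m).eq
  rw [h, mul_inv_cancel_right]
  exact Subgroup.zpow_mem_zpowers _ m

/-- The group `Λ^k_G(g) = (C_G(g) × ℝ)/⟨(g,-k)⟩`. -/
def LambdaK (G : Type) [Group G] (g : G) (k : ℤ) : Type :=
  (Subgroup.centralizer ({g} : Set G) × Multiplicative ℝ) ⧸ lambdaRel g k

instance (G : Type) [Group G] (g : G) (k : ℤ) : Group (LambdaK G g k) :=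
  inferInstanceAs (Group ((Subgroup.centralizer ({g} : Set G) × Multiplicative ℝ) ⧸ lambdaRel g k))

/-- The group `Λ_G(g) = (C_G(g) × ℝ)/⟨(g,-1)⟩`. -/
abbrev Lambda (G : Type) [Group G] (g : G) : Type := LambdaK G g 1

/-- The class `[h, t]` in `Λ^k_G(g)`. -/
def lmk {G : Type} [Group G] {g : G} {k : ℤ} (h : Subgroup.centralizer ({g} : Set G))
    (t : ℝ) : LambdaK G g k :=
  QuotientGroup.mk (h, Multiplicative.ofAdd t)

end
noncomputable section

/-- `ℝ → ℝ/ℤ` as a monoid hom of multiplicative groups. -/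
def circleHom : Multiplicative ℝ →* Multiplicative (AddCircle (1 : ℝ)) :=
  AddMonoidHom.toMultiplicative (QuotientAddGroup.mk' (AddSubgroup.zmultiples (1 : ℝ)))

/-- `(h, t) ↦ t mod ℤ` on `C_G(g) × ℝ`. -/
def piPre (G : Type) [Group G] (g : G) :
    (Subgroup.centralizer ({g} : Set G) × Multiplicative ℝ) →*
      Multiplicative (AddCircle (1 : ℝ)) :=
  circleHom.comp (MonoidHom.snd _ _)

theorem piPre_ker (G : Type) [Group G] (g : G) : lambdaRel g 1 ≤ (piPre G g).ker := by
  intro x hx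
  rw [lambdaRel, Subgroup.mem_zpowers_iff] at hx
  obtain ⟨m, rfl⟩ := hx
  rw [MonoidHom.mem_ker, map_zpow]
  have hz : piPre G g (zElem g 1) = 1 := by
    show Multiplicative.ofAdd (((-(1:ℤ) : ℝ) : AddCircle (1:ℝ))) = 1
    have : ((-(1:ℤ) : ℝ) : AddCircle (1:ℝ)) = 0 := by
      push_cast
      rw [show ((-1 : ℝ) : AddCircle (1:ℝ)) = -((1:ℝ) : AddCircle (1:ℝ)) by
        exact (QuotientAddGroup.mk_neg _ _), AddCircle.coe_period, neg_zero]
    rw [this]; rfl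
  rw [hz, one_zpow]

/-- The map `π : Λ_G(g) → ℝ/ℤ`, `[h,t] ↦ t mod ℤ`. -/
def piHom (G : Type) [Group G] (g : G) :
    Lambda G g →* Multiplicative (AddCircle (1 : ℝ)) :=
  QuotientGroup.lift _ (piPre G g) (piPre_ker G g)

/-- The map `ι : C_G(g) → Λ_G(g)`, `h ↦ [h, 0]`. -/
def iotaHom (G : Type) [Group G] (g : G) :
    Subgroup.centralizer ({g} : Set G) →* Lambda G g :=
  (QuotientGroup.mk' (lambdaRel g 1)).comp (MonoidHom.inl _ _)

/-- Division by `k` as an additive monoid hom of `ℝ`. -/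
def divHom (k : ℝ) : ℝ →+ ℝ :=
  AddMonoidHom.mk' (fun t => t / k) (fun a b => add_div a b k)

/-- The reduction map `ℝ/kℤ → ℝ/ℤ`, `t ↦ t/k mod ℤ`. -/
def redMap (k : ℝ) (hk : k ≠ 0) : AddCircle k →+ AddCircle (1 : ℝ) :=
  QuotientAddGroup.map (AddSubgroup.zmultiples k) (AddSubgroup.zmultiples (1 : ℝ))
    (divHom k)
    (by
      intro x hx
      obtain ⟨n, rfl⟩ := AddSubgroup.mem_zmultiples_iff.mp hx
      refine AddSubgroup.mem_comap.mpr (AddSubgroup.mem_zmultiples_iff.mpr ⟨n, ?_⟩)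
      show n • (1 : ℝ) = (n • k) / k
      rw [zsmul_eq_mul, zsmul_eq_mul, mul_one, mul_div_assoc, div_self hk, mul_one])

/-- The fiber product `{(x, u) ∈ Λ_G(g) × ℝ/kℤ : π(x) = u/k mod ℤ}`. -/
def fiberProd (G : Type) [Group G] (g : G) (k : ℝ) (hk : k ≠ 0) :
    Subgroup (Lambda G g × Multiplicative (AddCircle k)) where
  carrier := {p | piHom G g p.1 = Multiplicative.ofAdd (redMap k hk p.2.toAdd)}
  mul_mem' := by
    intro a b ha hb
    simp only [Set.mem_setOf_eq] at *
    show piHom G g (a.1 * b.1) = _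
    rw [map_mul, ha, hb]
    show _ = Multiplicative.ofAdd (redMap k hk (Multiplicative.toAdd (a.2 * b.2)))
    rw [toAdd_mul, map_add, ofAdd_add]
  one_mem' := by
    simp only [Set.mem_setOf_eq]
    show piHom G g 1 = _
    rw [map_one]
    show _ = Multiplicative.ofAdd (redMap k hk (Multiplicative.toAdd (1 : Multiplicative (AddCircle k))))
    rw [toAdd_one, map_zero, ofAdd_zero]
  inv_mem' := by
    intro a ha
    simp only [Set.mem_setOf_eq] at *
    show piHom G g a.1⁻¹ = _
    rw [map_inv, ha]
    show _ = Multiplicative.ofAdd (redMap k hk (Multiplicative.toAdd a.2⁻¹))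
    rw [toAdd_inv, map_neg, ofAdd_neg]

/- ## Auxiliary material for the pullback theorem -/

lemma zElem_zpow' {G : Type} [Group G] (g : G) (k m : ℤ) :
    (zElem g k) ^ m = (gElem g ^ m, Multiplicative.ofAdd (-((k : ℝ) * m))) := by
  refine Prod.ext rfl ?_
  show (Multiplicative.ofAdd (-(k : ℝ))) ^ m = _
  rw [← ofAdd_zsmul]
  congr 1
  rw [zsmul_eq_mul]
  ring

/-- `(h, t) ↦ [h, t/k]` from `C_G(g) × ℝ` to `Λ_G(g)`. -/
def alphaPre (G : Type) [Group G] (g : G) (k : ℤ) :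
    (Subgroup.centralizer ({g} : Set G) × Multiplicative ℝ) →* Lambda G g :=
  (QuotientGroup.mk' (lambdaRel g 1)).comp
    ((MonoidHom.id _).prodMap (AddMonoidHom.toMultiplicative (divHom (k : ℝ))))

lemma alphaPre_apply {G : Type} [Group G] (g : G) (k : ℤ)
    (h : Subgroup.centralizer ({g} : Set G)) (t : ℝ) :
    alphaPre G g k (h, Multiplicative.ofAdd t) = lmk h (t / (k : ℝ)) := rfl

theorem alphaPre_ker (G : Type) [Group G] (g : G) (k : ℤ) (hk : (k : ℝ) ≠ 0) :
    lambdaRel g k ≤ (alphaPre G g k).ker := by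
  intro x hx
  obtain ⟨m, rfl⟩ := Subgroup.mem_zpowers_iff.mp hx
  rw [MonoidHom.mem_ker, map_zpow]
  have hz : alphaPre G g k (zElem g k) = 1 := by
    rw [show zElem g k = (gElem g, Multiplicative.ofAdd (-(k : ℝ))) from rfl,
      alphaPre_apply, neg_div, div_self hk]
    rw [show lmk (gElem g) (-1 : ℝ) = QuotientGroup.mk (zElem g 1) from by
      unfold lmk zElem; norm_num; rfl]
    refine (QuotientGroup.eq_one_iff (N := lambdaRel g 1) _).mpr ?_
    exact Subgroup.mem_zpowers _
  rw [hz, one_zpow]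

/-- `(h, t) ↦ t mod kℤ` from `C_G(g) × ℝ` to `ℝ/kℤ`. -/
def pikPre (G : Type) [Group G] (g : G) (k : ℝ) :
    (Subgroup.centralizer ({g} : Set G) × Multiplicative ℝ) →*
      Multiplicative (AddCircle k) :=
  (AddMonoidHom.toMultiplicative (QuotientAddGroup.mk' (AddSubgroup.zmultiples k))).comp
    (MonoidHom.snd _ _)

theorem pikPre_ker (G : Type) [Group G] (g : G) (k : ℤ) :
    lambdaRel g k ≤ (pikPre G g (k : ℝ)).ker := by
  intro x hx
  obtain ⟨m, rfl⟩ := Subgroup.mem_zpowers_iff.mp hx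
  rw [MonoidHom.mem_ker, map_zpow]
  have hz : pikPre G g (k : ℝ) (zElem g k) = 1 := by
    show Multiplicative.ofAdd ((-(k : ℝ) : ℝ) : AddCircle (k : ℝ)) = 1
    have : ((-(k : ℝ) : ℝ) : AddCircle (k : ℝ)) = 0 := by
      rw [QuotientAddGroup.eq_zero_iff]
      exact ⟨-1, by simp⟩
    rw [this]; rfl
  rw [hz, one_zpow]

/-- `α_k : Λ^k_G(g) → Λ_G(g)`, `[h,t] ↦ [h, t/k]`. -/
def alphaK (G : Type) [Group G] (g : G) (k : ℤ) (hk : (k : ℝ) ≠ 0) :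
    LambdaK G g k →* Lambda G g :=
  QuotientGroup.lift _ (alphaPre G g k) (alphaPre_ker G g k hk)

/-- `π_k : Λ^k_G(g) → ℝ/kℤ`, `[h,t] ↦ t mod kℤ`. -/
def piK (G : Type) [Group G] (g : G) (k : ℤ) :
    LambdaK G g k →* Multiplicative (AddCircle (k : ℝ)) :=
  QuotientGroup.lift _ (pikPre G g (k : ℝ)) (pikPre_ker G g k)

/-- `Λ^k_G(g)` together with `α_k` and `π_k` is the pullback of
`π : Λ_G(g) → ℝ/ℤ` along the reduction map `ℝ/kℤ → ℝ/ℤ`. -/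
theorem lambdaK_is_pullback (G : Type) [Group G] [Finite G] (g : G) (k : ℤ) (hk : 1 ≤ k) :
    ∀ hk' : (k : ℝ) ≠ 0,
    (∀ t : ℝ, redMap (k : ℝ) hk' ((t : AddCircle (k : ℝ))) = ((t / k : ℝ) : AddCircle (1 : ℝ))) ∧
    ∃ (alphak : LambdaK G g k →* Lambda G g)
      (pik : LambdaK G g k →* Multiplicative (AddCircle (k : ℝ))),
      (∀ (h : Subgroup.centralizer ({g} : Set G)) (t : ℝ),
        alphak (lmk h t) = lmk h (t / (k : ℝ))) ∧
      (∀ (h : Subgroup.centralizer ({g} : Set G)) (t : ℝ),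
        pik (lmk h t) = Multiplicative.ofAdd ((t : AddCircle (k : ℝ)))) ∧
      ∃ e : LambdaK G g k ≃* fiberProd G g (k : ℝ) hk',
        ∀ x : LambdaK G g k,
          ((e x : Lambda G g × Multiplicative (AddCircle (k : ℝ)))).1 = alphak x ∧
          ((e x : Lambda G g × Multiplicative (AddCircle (k : ℝ)))).2 = pik x := by
  intro hk'
  refine ⟨fun t => rfl, alphaK G g k hk', piK G g k, fun h t => rfl, fun h t => rfl, ?_⟩
  -- the combined homomorphism lands in the fiber product
  have hmem : ∀ x : LambdaK G g k,
      ((alphaK G g k hk').prod (piK G g k)) x ∈ fiberProd G g (k : ℝ) hk' := by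
    intro x
    induction x using QuotientGroup.induction_on with
    | H p =>
      obtain ⟨h, s⟩ := p
      show piHom G g (alphaK G g k hk' (QuotientGroup.mk (h, s))) =
        Multiplicative.ofAdd (redMap (k : ℝ) hk'
          (Multiplicative.toAdd (piK G g k (QuotientGroup.mk (h, s)))))
      rfl
  set φ : LambdaK G g k →* fiberProd G g (k : ℝ) hk' :=
    MonoidHom.codRestrict ((alphaK G g k hk').prod (piK G g k)) _ hmem with hφ
  -- injectivity
  have hinj : Function.Injective (alphaK G g k hk') := by
    refine (injective_iff_map_eq_one _).mpr ?_
    intro x hx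
    induction x using QuotientGroup.induction_on with
    | H p =>
      obtain ⟨h, s⟩ := p
      rw [show alphaK G g k hk' (QuotientGroup.mk (h, s)) =
          QuotientGroup.mk ((h, Multiplicative.ofAdd (Multiplicative.toAdd s / (k : ℝ))) :
            Subgroup.centralizer ({g} : Set G) × Multiplicative ℝ) from rfl] at hx
      replace hx := (QuotientGroup.eq_one_iff (N := lambdaRel g 1) _).mp hx
      obtain ⟨m, hm⟩ := Subgroup.mem_zpowers_iff.mp hx
      rw [zElem_zpow' g 1 m, Prod.ext_iff] at hm
      obtain ⟨hm1, hm2⟩ := hm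
      have hs : Multiplicative.toAdd s / (k : ℝ) = -((1 : ℝ) * m) := by
        have := congrArg Multiplicative.toAdd hm2
        simpa using this.symm
      have hs' : Multiplicative.toAdd s = -((k : ℝ) * m) := by
        field_simp at hs
        rw [hs]
      refine (QuotientGroup.eq_one_iff (N := lambdaRel g k) _).mpr ?_
      refine Subgroup.mem_zpowers_iff.mpr ⟨m, ?_⟩
      rw [zElem_zpow' g k m]
      refine Prod.ext (by exact hm1) ?_
      simp only
      rw [← hs']
      exact (ofAdd_toAdd s)
  have hinjφ : Function.Injective φ := by
    intro a b hab
    apply hinj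
    have h2 := Subtype.ext_iff.mp hab
    exact (Prod.ext_iff.mp h2).1
  -- surjectivity
  have hsurj : Function.Surjective φ := by
    rintro ⟨⟨x, u⟩, hxu⟩
    induction x using QuotientGroup.induction_on with
    | H p =>
      obtain ⟨h, s⟩ := p
      obtain ⟨t, rfl⟩ : ∃ t : ℝ, Multiplicative.ofAdd ((t : AddCircle (k : ℝ))) = u := by
        obtain ⟨t, ht⟩ := Quotient.exists_rep (Multiplicative.toAdd u)
        exact ⟨t, by rw [show ((t : ℝ) : AddCircle (k : ℝ)) = Multiplicative.toAdd u from ht,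
          ofAdd_toAdd]⟩
      have hcond : ((Multiplicative.toAdd s : ℝ) : AddCircle (1 : ℝ)) =
          ((t / (k : ℝ) : ℝ) : AddCircle (1 : ℝ)) := by
        have := hxu
        simp only [fiberProd, Subgroup.mem_mk, Set.mem_setOf_eq] at this
        exact Multiplicative.ofAdd.injective this
      rw [QuotientAddGroup.eq] at hcond
      obtain ⟨n, hn⟩ := AddSubgroup.mem_zmultiples_iff.mp hcond
      have hn' : t / (k : ℝ) = Multiplicative.toAdd s + n := by
        have : (n : ℝ) = -Multiplicative.toAdd s + t / (k : ℝ) := by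
          rw [← hn, zsmul_eq_mul, mul_one]
        linarith [this]
      refine ⟨QuotientGroup.mk (h * gElem g ^ (-n), Multiplicative.ofAdd t), ?_⟩
      refine Subtype.ext (Prod.ext ?_ ?_)
      · show alphaK G g k hk' (QuotientGroup.mk (h * gElem g ^ (-n), Multiplicative.ofAdd t)) =
          QuotientGroup.mk (h, s)
        rw [show alphaK G g k hk'
            (QuotientGroup.mk (h * gElem g ^ (-n), Multiplicative.ofAdd t)) =
            QuotientGroup.mk ((h * gElem g ^ (-n), Multiplicative.ofAdd (t / (k : ℝ))) :
              Subgroup.centralizer ({g} : Set G) × Multiplicative ℝ) from rfl]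
        refine (QuotientGroup.eq (s := lambdaRel g 1)).mpr ?_
        refine Subgroup.mem_zpowers_iff.mpr ⟨n, ?_⟩
        rw [zElem_zpow' g 1 n]
        have e1 : ((h * gElem g ^ (-n), Multiplicative.ofAdd (t / (k : ℝ))) :
            Subgroup.centralizer ({g} : Set G) × Multiplicative ℝ)⁻¹ * (h, s)
            = (gElem g ^ n, Multiplicative.ofAdd (-(((1 : ℤ) : ℝ) * (n : ℤ)))) := by
          refine Prod.ext ?_ ?_
          · show (h * gElem g ^ (-n))⁻¹ * h = gElem g ^ n
            rw [mul_inv_rev, zpow_neg, inv_inv, mul_assoc, inv_mul_cancel, mul_one]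
          · show (Multiplicative.ofAdd (t / (k : ℝ)))⁻¹ * s =
              Multiplicative.ofAdd (-(((1 : ℤ) : ℝ) * (n : ℤ)))
            rw [← ofAdd_toAdd s, ← ofAdd_neg, ← ofAdd_add]
            congr 1
            rw [hn']
            push_cast
            ring
        exact e1.symm
      · rfl
  exact ⟨MulEquiv.ofBijective φ ⟨hinjφ, hsurj⟩, fun x => ⟨rfl, rfl⟩⟩

end
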